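/- (Main theorem: patch-traversal rotation invariance of the Spectral Traversal Scan.) Let f : Fin N → EuclideanSpace ℝ (Fin d) be patch features, s > 0 a scale, and σ a permutation of Fin N (the relabeling of patches induced by a rotation), and assume the features are invariant under the rotation, i.e., the rotated image has features g = f ∘ σ⁻¹. Assume all degrees of W(f) are strictly positive. If u ∈ ℝ^N satisfies L_sym(W(f)) *ᵥ u = λ • u and u is injective, then: (1) u' = u ∘ σ⁻¹ satisfies L_sym(W(g)) *ᵥ u' = λ • u'; and (2) if e : Fin N → Fin N is the unique bijection with k ↦ u(e(k)) strictly increasing, then σ ∘ e is the unique bijection with k ↦ u'((σ ∘ e)(k)) strictly increasing. Hence the spectral traversal visits the same patches in the same order before and after the rotation. -/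
import Mathlib


open Matrix

/-- Gaussian adjacency matrix: `W(f)_{ij} = exp(−‖f i − f j‖² / (2 s²))`. -/
noncomputable def gaussW {N d : ℕ} (s : ℝ) (f : Fin N → EuclideanSpace ℝ (Fin d)) :
    Matrix (Fin N) (Fin N) ℝ :=
  Matrix.of fun i j => Real.exp (-(‖f i - f j‖ ^ 2) / (2 * s ^ 2))

/-- Degree of node `i` in `W`: the sum of the `i`-th row. -/
def deg {N : ℕ} (W : Matrix (Fin N) (Fin N) ℝ) (i : Fin N) : ℝ := ∑ j, W i j

/-- Symmetric normalized Laplacian `L_sym(W) = I − D^{−1/2} W D^{−1/2}`. -/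
noncomputable def Lsym {N : ℕ} (W : Matrix (Fin N) (Fin N) ℝ) : Matrix (Fin N) (Fin N) ℝ :=
  1 - Matrix.diagonal (fun i => (Real.sqrt (deg W i))⁻¹) * W *
        Matrix.diagonal (fun i => (Real.sqrt (deg W i))⁻¹)

/-- Patch-traversal rotation invariance of the Spectral Traversal Scan. -/
theorem spectral_traversal_rotation_invariant {N d : ℕ}
    (f : Fin N → EuclideanSpace ℝ (Fin d)) (s : ℝ) (hs : 0 < s)
    (σ : Equiv.Perm (Fin N))
    (hdeg : ∀ i, 0 < deg (gaussW s f) i)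
    (u : Fin N → ℝ) (lam : ℝ)
    (hu : Lsym (gaussW s f) *ᵥ u = lam • u)
    (huinj : Function.Injective u)
    (e : Fin N → Fin N) (he : Function.Bijective e)
    (hmono : StrictMono fun k => u (e k)) :
    (Lsym (gaussW s (f ∘ σ.symm)) *ᵥ (u ∘ σ.symm) = lam • (u ∘ σ.symm)) ∧
    Function.Bijective (σ ∘ e) ∧
    StrictMono (fun k => (u ∘ σ.symm) ((σ ∘ e) k)) ∧
    (∀ e' : Fin N → Fin N, Function.Bijective e' →
      StrictMono (fun k => (u ∘ σ.symm) (e' k)) → e' = σ ∘ e) := by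
  classical
  set W := gaussW s f with hW
  set W' := gaussW s (f ∘ σ.symm) with hW'
  have hWentry : ∀ i j, W' i j = W (σ.symm i) (σ.symm j) := by
    intro i j; simp [hW, hW', gaussW]
  have hdeg' : ∀ i, deg W' i = deg W (σ.symm i) := by
    intro i
    simp only [deg, hWentry]
    exact Fintype.sum_equiv σ.symm _ _ (fun j => rfl)
  have hLentry : ∀ i j, Lsym W' i j = Lsym W (σ.symm i) (σ.symm j) := by
    intro i j
    simp only [Lsym, Matrix.sub_apply, Matrix.one_apply, Matrix.mul_apply,
      Matrix.diagonal_apply, hdeg']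
    congr 1
    · by_cases h : i = j
      · simp [h]
      · rw [if_neg h, if_neg (fun hh => h (σ.symm.injective hh))]
    · simp only [ite_mul, mul_ite, zero_mul, mul_zero, Finset.sum_ite_eq,
        Finset.sum_ite_eq', Finset.mem_univ, if_true, hWentry, hdeg']
  have key1 : Lsym W' *ᵥ (u ∘ σ.symm) = lam • (u ∘ σ.symm) := by
    funext i
    have : (Lsym W' *ᵥ (u ∘ σ.symm)) i = (Lsym W *ᵥ u) (σ.symm i) := by
      simp only [Matrix.mulVec, dotProduct, hLentry, Function.comp]
      exact Fintype.sum_equiv σ.symm _ _ (fun j => rfl)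
    rw [this, hu]; rfl
  -- uniqueness of sorting bijection
  have sortuniq : ∀ g h : Fin N → Fin N, Function.Bijective g → Function.Bijective h →
      StrictMono (fun k => u (g k)) → StrictMono (fun k => u (h k)) → g = h := by
    intro g h hg hh hmg hmh
    set T : Finset ℝ := Finset.univ.image u with hT
    have hcard : T.card = N := by
      rw [hT, Finset.card_image_of_injective _ huinj, Finset.card_univ, Fintype.card_fin]
    have hmem : ∀ (g : Fin N → Fin N), ∀ k, u (g k) ∈ T := by
      intro g k; exact Finset.mem_image_of_mem u (Finset.mem_univ _)
    have h1 := Finset.orderEmbOfFin_unique hcard (hmem g) hmg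
    have h2 := Finset.orderEmbOfFin_unique hcard (hmem h) hmh
    have : (fun k => u (g k)) = fun k => u (h k) := by rw [h1, h2]
    funext k
    exact huinj (congrFun this k)
  refine ⟨key1, (σ.bijective).comp he, ?_, ?_⟩
  · convert hmono using 2 with k
    simp
  · intro e' he' hm'
    have hb : Function.Bijective (σ.symm ∘ e') := (σ.symm.bijective).comp he'
    have hm2 : StrictMono (fun k => u ((σ.symm ∘ e') k)) := hm'
    have := sortuniq (σ.symm ∘ e') e hb he hm2 hmono
    funext k
    have := congrFun this k
    simp only [Function.comp_apply] at this ⊢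
    rw [← this]; simp
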